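/- For the Hessian matrix of each partial derivative ∂₁f, ∂₂f, ∂₃f of the cubic f = 14x₁³ + 6x₁²x₂ + 24x₁²x₃ + 12x₁x₂x₃ + 6x₁x₃² + 3x₂x₃², namely the matrices [[84,12,48],[12,0,12],[48,12,12]], [[12,0,12],[0,0,0],[12,0,6]], and [[48,12,12],[12,0,6],[12,6,0]], each has exactly one positive eigenvalue. -/

import Mathlib

lemma trace_eq_sum_eig {A : Matrix (Fin 3) (Fin 3) ℝ} (hA : A.IsHermitian) :
    A.trace = ∑ i, hA.eigenvalues i := by
  nth_rewrite 1 [hA.spectral_theorem]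
  rw [Unitary.conjStarAlgAut_apply]
  rw [Matrix.trace_mul_cycle,
    (Matrix.mem_unitaryGroup_iff').mp (Matrix.IsHermitian.eigenvectorUnitary hA).2, one_mul]
  simp [Matrix.trace_diagonal]

lemma det_smul_sub_eq_zero {A : Matrix (Fin 3) (Fin 3) ℝ} (hA : A.IsHermitian) (i : Fin 3) :
    ((hA.eigenvalues i) • (1 : Matrix (Fin 3) (Fin 3) ℝ) - A).det = 0 := by
  have h := hA.eigenvalues_mem_spectrum_real i
  rw [spectrum.mem_iff] at h
  by_contra hd
  apply h
  rw [Algebra.algebraMap_eq_smul_one]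
  exact (Matrix.isUnit_iff_isUnit_det _).2 (isUnit_iff_ne_zero.2 hd)

lemma count_pos (e : Fin 3 → ℝ) (t p : ℝ) (ht : 0 < t) (hp : p < 0)
    (hsum : e 0 + e 1 + e 2 = t)
    (hroot : ∀ i, e i * (e i * e i - t * e i + p) = 0) :
    (Finset.univ.filter fun i => 0 < e i).card = 1 := by
  set d := Real.sqrt (t ^ 2 - 4 * p) with hd
  have hd2 : d ^ 2 = t ^ 2 - 4 * p := Real.sq_sqrt (by nlinarith)
  have hdt : t < d := by nlinarith [Real.sqrt_nonneg (t ^ 2 - 4 * p)]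
  set a := (t + d) / 2 with ha
  set b := (t - d) / 2 with hb
  have hap : 0 < a := by simp only [ha]; linarith
  have hbn : b < 0 := by simp only [hb]; linarith
  have hbn' : ¬ (0 : ℝ) < b := not_lt.2 hbn.le
  have h00 : ¬ (0 : ℝ) < (0 : ℝ) := lt_irrefl 0
  have habs : a + b = t := by simp only [ha, hb]; ring
  have habp : a * b = p := by simp only [ha, hb]; nlinarith
  have hcases : ∀ i, e i = 0 ∨ e i = a ∨ e i = b := by
    intro i
    have h1 := hroot i
    have hfac : e i * ((e i - a) * (e i - b)) = 0 := by
      rw [show (e i - a) * (e i - b) = e i * e i - (a + b) * e i + a * b by ring, habs, habp]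
      exact h1
    rcases mul_eq_zero.1 hfac with h | h
    · exact Or.inl h
    · rcases mul_eq_zero.1 h with h | h
      · exact Or.inr (Or.inl (by linarith))
      · exact Or.inr (Or.inr (by linarith))
  have huniv : (Finset.univ : Finset (Fin 3)) = {0, 1, 2} := by decide
  rcases hcases 0 with h0 | h0 | h0 <;> rcases hcases 1 with h1 | h1 | h1 <;>
    rcases hcases 2 with h2 | h2 | h2 <;>
    first
      | (exfalso; rw [h0, h1, h2] at hsum; linarith)
      | (rw [huniv]
         simp [Finset.filter_insert, Finset.filter_singleton, h0, h1, h2, hap, hbn', h00])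

lemma apply_one (A : Matrix (Fin 3) (Fin 3) ℝ) (h : A.IsHermitian) (t p : ℝ)
    (ht : 0 < t) (hp : p < 0)
    (htr : A.trace = t)
    (hdet : ∀ x : ℝ, (x • (1 : Matrix (Fin 3) (Fin 3) ℝ) - A).det
      = x * (x * x - t * x + p)) :
    (Finset.univ.filter fun i => 0 < h.eigenvalues i).card = 1 := by
  apply count_pos _ t p ht hp
  · have := trace_eq_sum_eig h
    rw [htr, Fin.sum_univ_three] at this
    linarith
  · intro i
    have := det_smul_sub_eq_zero h i
    rw [hdet] at this
    exact this

/-- Each of the Hessian matrices of `∂₁f`, `∂₂f`, `∂₃f` for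
`f = 14x₁³ + 6x₁²x₂ + 24x₁²x₃ + 12x₁x₂x₃ + 6x₁x₃² + 3x₂x₃²`
has exactly one positive eigenvalue. -/
theorem stmt5 :
    (∀ h : (!![84, 12, 48; 12, 0, 12; 48, 12, 12] : Matrix (Fin 3) (Fin 3) ℝ).IsHermitian,
      (Finset.univ.filter fun i => 0 < h.eigenvalues i).card = 1) ∧
    (∀ h : (!![12, 0, 12; 0, 0, 0; 12, 0, 6] : Matrix (Fin 3) (Fin 3) ℝ).IsHermitian,
      (Finset.univ.filter fun i => 0 < h.eigenvalues i).card = 1) ∧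
    (∀ h : (!![48, 12, 12; 12, 0, 6; 12, 6, 0] : Matrix (Fin 3) (Fin 3) ℝ).IsHermitian,
      (Finset.univ.filter fun i => 0 < h.eigenvalues i).card = 1) := by
  refine ⟨fun h => apply_one _ h 96 (-1584) (by norm_num) (by norm_num) ?_ ?_,
          fun h => apply_one _ h 18 (-72) (by norm_num) (by norm_num) ?_ ?_,
          fun h => apply_one _ h 48 (-324) (by norm_num) (by norm_num) ?_ ?_⟩ <;>
    first
      | (intro x
         simp [Matrix.det_fin_three, Matrix.smul_apply, Matrix.one_apply,
           Matrix.vecHead, Matrix.vecTail]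
         ring)
      | norm_num [Matrix.trace_fin_three, Matrix.vecHead, Matrix.vecTail, Matrix.cons_val_two]
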